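/- As a representation of gl(V) with V = ℂ^ℓ, ℓ ≥ 3, the space of algebraic Weyl tensors on ℂ^{2ℓ} = V ⊕ V* (with the canonical split quadratic form) decomposes with exactly one trivial one-dimensional summand; in particular the subspace of gl(ℓ,ℂ)-invariant Weyl tensors on ℂ^{2ℓ} is one-dimensional. -/

import Mathlib

open Matrix

/-- The split symmetric bilinear form on `ℂ^{2ℓ} = V ⊕ V*` (dual pairing of the two isotropic
summands). -/
noncomputable def splitForm (ℓ : ℕ) : Matrix (Fin ℓ ⊕ Fin ℓ) (Fin ℓ ⊕ Fin ℓ) ℂ :=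
  fromBlocks 0 1 1 0

/-- The element of `gl(ℓ,ℂ) ⊂ so(2ℓ,ℂ)` (the stabilizer of the isotropic decomposition
`ℂ^{2ℓ} = V ⊕ V*`) determined by `B ∈ gl(V)`. -/
def glEmb (ℓ : ℕ) (B : Matrix (Fin ℓ) (Fin ℓ) ℂ) :
    Matrix (Fin ℓ ⊕ Fin ℓ) (Fin ℓ ⊕ Fin ℓ) ℂ :=
  fromBlocks B 0 0 (-Bᵀ)

/-- An algebraic Weyl tensor on `ℂ^{2ℓ}` with the canonical split quadratic form: a
`(4,0)`-tensor with the Riemann symmetries (skew in the first and last pairs, pair-exchange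
symmetric, first Bianchi identity) lying in the kernel of the Ricci contraction. -/
def IsWeylTensor (ℓ : ℕ) (φ : (Fin ℓ ⊕ Fin ℓ) → (Fin ℓ ⊕ Fin ℓ) → (Fin ℓ ⊕ Fin ℓ) →
    (Fin ℓ ⊕ Fin ℓ) → ℂ) : Prop :=
  (∀ a b c d, φ a b c d = -φ b a c d) ∧
  (∀ a b c d, φ a b c d = -φ a b d c) ∧
  (∀ a b c d, φ a b c d = φ c d a b) ∧
  (∀ a b c d, φ a b c d + φ a c d b + φ a d b c = 0) ∧
  (∀ b d, ∑ x, ∑ y, splitForm ℓ x y * φ x b y d = 0)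

/-- `φ` is invariant under the natural action of `gl(ℓ,ℂ) ⊂ so(2ℓ,ℂ)` on `(4,0)`-tensors. -/
def IsGlInvariant (ℓ : ℕ) (φ : (Fin ℓ ⊕ Fin ℓ) → (Fin ℓ ⊕ Fin ℓ) → (Fin ℓ ⊕ Fin ℓ) →
    (Fin ℓ ⊕ Fin ℓ) → ℂ) : Prop :=
  ∀ B : Matrix (Fin ℓ) (Fin ℓ) ℂ, ∀ a b c d,
    ∑ e, (glEmb ℓ B e a * φ e b c d + glEmb ℓ B e b * φ a e c d +
          glEmb ℓ B e c * φ a b e d + glEmb ℓ B e d * φ a b c e) = 0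

namespace WeylAux
variable (ℓ : ℕ)

/-- The invariant symplectic-type form on `ℂ^{2ℓ}`. -/
noncomputable def Wm : Matrix (Fin ℓ ⊕ Fin ℓ) (Fin ℓ ⊕ Fin ℓ) ℂ :=
  fromBlocks 0 1 (-1) 0

@[simp] lemma G_ll (i j : Fin ℓ) : splitForm ℓ (Sum.inl i) (Sum.inl j) = 0 := rfl
@[simp] lemma G_rr (i j : Fin ℓ) : splitForm ℓ (Sum.inr i) (Sum.inr j) = 0 := rfl
@[simp] lemma G_lr (i j : Fin ℓ) :
    splitForm ℓ (Sum.inl i) (Sum.inr j) = if i = j then 1 else 0 := by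
  simp [splitForm, fromBlocks, one_apply]
@[simp] lemma G_rl (i j : Fin ℓ) :
    splitForm ℓ (Sum.inr i) (Sum.inl j) = if i = j then 1 else 0 := by
  simp [splitForm, fromBlocks, one_apply]

@[simp] lemma W_ll (i j : Fin ℓ) : Wm ℓ (Sum.inl i) (Sum.inl j) = 0 := rfl
@[simp] lemma W_rr (i j : Fin ℓ) : Wm ℓ (Sum.inr i) (Sum.inr j) = 0 := rfl
@[simp] lemma W_lr (i j : Fin ℓ) :
    Wm ℓ (Sum.inl i) (Sum.inr j) = if i = j then 1 else 0 := by
  simp [Wm, fromBlocks, one_apply]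
@[simp] lemma W_rl (i j : Fin ℓ) :
    Wm ℓ (Sum.inr i) (Sum.inl j) = -if i = j then 1 else 0 := by
  simp [Wm, fromBlocks, one_apply]

lemma G_symm (a b : Fin ℓ ⊕ Fin ℓ) : splitForm ℓ a b = splitForm ℓ b a := by
  rcases a with i | i <;> rcases b with j | j <;>
    simp [splitForm, fromBlocks, one_apply, eq_comm]

lemma W_skew (a b : Fin ℓ ⊕ Fin ℓ) : Wm ℓ a b = -Wm ℓ b a := by
  rcases a with i | i <;> rcases b with j | j <;>
    simp [Wm, fromBlocks, one_apply, eq_comm]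

/-- The distinguished invariant Weyl tensor: `3·(g ∧ g) + (2ℓ-1)·(Ω-part)`. -/
noncomputable def phi0 (a b c d : Fin ℓ ⊕ Fin ℓ) : ℂ :=
  3 * (splitForm ℓ a c * splitForm ℓ b d - splitForm ℓ a d * splitForm ℓ b c) +
  (2 * (ℓ : ℂ) - 1) * (2 * Wm ℓ a b * Wm ℓ c d + Wm ℓ a c * Wm ℓ b d - Wm ℓ a d * Wm ℓ b c)

lemma phi0_skew1 (a b c d : Fin ℓ ⊕ Fin ℓ) : phi0 ℓ a b c d = -phi0 ℓ b a c d := by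
  simp only [phi0]
  rw [G_symm ℓ b c, G_symm ℓ b d, W_skew ℓ b a, W_skew ℓ b c, W_skew ℓ b d]; ring

lemma phi0_skew2 (a b c d : Fin ℓ ⊕ Fin ℓ) : phi0 ℓ a b c d = -phi0 ℓ a b d c := by
  simp only [phi0]
  rw [W_skew ℓ d c]; ring

lemma phi0_pair (a b c d : Fin ℓ ⊕ Fin ℓ) : phi0 ℓ a b c d = phi0 ℓ c d a b := by
  simp only [phi0]
  rw [G_symm ℓ c a, G_symm ℓ d b, G_symm ℓ c b, G_symm ℓ d a,
      W_skew ℓ c a, W_skew ℓ d b, W_skew ℓ c b, W_skew ℓ d a]; ring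

lemma phi0_bianchi (a b c d : Fin ℓ ⊕ Fin ℓ) :
    phi0 ℓ a b c d + phi0 ℓ a c d b + phi0 ℓ a d b c = 0 := by
  simp only [phi0]
  rw [G_symm ℓ c b, G_symm ℓ d c, G_symm ℓ d b,
      W_skew ℓ d b, W_skew ℓ c b, W_skew ℓ d c]; ring

lemma contractR (A B : Matrix (Fin ℓ ⊕ Fin ℓ) (Fin ℓ ⊕ Fin ℓ) ℂ) (c e : Fin ℓ ⊕ Fin ℓ) :
    ∑ x, ∑ y, splitForm ℓ x y * (A x c * B y e) = (Aᵀ * splitForm ℓ * B) c e := by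
  rw [Finset.sum_comm, Matrix.mul_apply]
  refine Finset.sum_congr rfl fun y _ => ?_
  rw [Matrix.mul_apply, Finset.sum_mul]
  refine Finset.sum_congr rfl fun x _ => ?_
  simp [Matrix.transpose_apply]; ring

lemma contractL (A B : Matrix (Fin ℓ ⊕ Fin ℓ) (Fin ℓ ⊕ Fin ℓ) ℂ) (c e : Fin ℓ ⊕ Fin ℓ) :
    ∑ x, ∑ y, splitForm ℓ x y * (A x c * B e y) = (Aᵀ * splitForm ℓ * Bᵀ) c e := by
  rw [← contractR]
  refine Finset.sum_congr rfl fun x _ => Finset.sum_congr rfl fun y _ => ?_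
  simp [Matrix.transpose_apply]

lemma traceconst (A : Matrix (Fin ℓ ⊕ Fin ℓ) (Fin ℓ ⊕ Fin ℓ) ℂ) :
    ∑ x, ∑ y, splitForm ℓ x y * A x y = Matrix.trace (splitForm ℓ * Aᵀ) := by
  rw [Matrix.trace]
  refine Finset.sum_congr rfl fun x _ => ?_
  simp [Matrix.diag, Matrix.mul_apply]

lemma hT1 : ∑ x, ∑ y, splitForm ℓ x y * splitForm ℓ x y = 2 * (ℓ : ℂ) := by
  rw [traceconst]
  rw [show (splitForm ℓ)ᵀ = splitForm ℓ by simp [splitForm, fromBlocks_transpose]]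
  rw [show splitForm ℓ * splitForm ℓ = 1 by
    simp [splitForm, fromBlocks_multiply, ← fromBlocks_one]]
  simp [Matrix.trace_one]; ring

lemma hT4 : ∑ x, ∑ y, splitForm ℓ x y * Wm ℓ x y = 0 := by
  rw [traceconst]
  rw [show (Wm ℓ)ᵀ = -Wm ℓ by simp [Wm, fromBlocks_transpose, fromBlocks_neg]]
  rw [show splitForm ℓ * -Wm ℓ = fromBlocks 1 0 0 (-1) by
    simp [splitForm, Wm, fromBlocks_multiply, fromBlocks_neg]]
  simp [Matrix.trace, Matrix.diag, Fintype.sum_sum_type, fromBlocks, one_apply]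

lemma phi0_trace (b d : Fin ℓ ⊕ Fin ℓ) :
    ∑ x, ∑ y, splitForm ℓ x y * phi0 ℓ x b y d = 0 := by
  have h2 := contractL ℓ (splitForm ℓ) (splitForm ℓ) d b
  have h3 := contractR ℓ (Wm ℓ) (Wm ℓ) b d
  have h5 := contractL ℓ (Wm ℓ) (Wm ℓ) d b
  rw [show (splitForm ℓ)ᵀ * splitForm ℓ * (splitForm ℓ)ᵀ = splitForm ℓ by
    simp [splitForm, fromBlocks_transpose, fromBlocks_multiply]] at h2
  rw [show (Wm ℓ)ᵀ * splitForm ℓ * Wm ℓ = -splitForm ℓ by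
    simp [splitForm, Wm, fromBlocks_transpose, fromBlocks_multiply, fromBlocks_neg]] at h3
  rw [show (Wm ℓ)ᵀ * splitForm ℓ * (Wm ℓ)ᵀ = splitForm ℓ by
    simp [splitForm, Wm, fromBlocks_transpose, fromBlocks_multiply, fromBlocks_neg]] at h5
  have expand : (∑ x, ∑ y, splitForm ℓ x y * phi0 ℓ x b y d)
      = (3 * splitForm ℓ b d) * (∑ x, ∑ y, splitForm ℓ x y * splitForm ℓ x y)
      + (-3 : ℂ) * (∑ x, ∑ y, splitForm ℓ x y * (splitForm ℓ x d * splitForm ℓ b y))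
      + ((2 * (ℓ : ℂ) - 1) * 2) * (∑ x, ∑ y, splitForm ℓ x y * (Wm ℓ x b * Wm ℓ y d))
      + ((2 * (ℓ : ℂ) - 1) * Wm ℓ b d) * (∑ x, ∑ y, splitForm ℓ x y * Wm ℓ x y)
      + (-(2 * (ℓ : ℂ) - 1)) * (∑ x, ∑ y, splitForm ℓ x y * (Wm ℓ x d * Wm ℓ b y)) := by
    simp only [Finset.mul_sum]
    simp only [← Finset.sum_add_distrib]
    refine Finset.sum_congr rfl fun x _ => Finset.sum_congr rfl fun y _ => ?_
    simp only [phi0]; ring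
  have h2' : (∑ x, ∑ y, splitForm ℓ x y * (splitForm ℓ x d * splitForm ℓ b y))
      = splitForm ℓ b d := by
    refine h2.trans ?_; rw [G_symm ℓ d b]
  rw [expand, hT1, hT4, h2', h3, h5, Matrix.neg_apply, G_symm ℓ d b]
  ring

lemma glinvG (B : Matrix (Fin ℓ) (Fin ℓ) ℂ) :
    (glEmb ℓ B)ᵀ * splitForm ℓ + splitForm ℓ * glEmb ℓ B = 0 := by
  simp [glEmb, splitForm, fromBlocks_transpose, fromBlocks_multiply, fromBlocks_add,
    ← fromBlocks_zero]

lemma glinvW (B : Matrix (Fin ℓ) (Fin ℓ) ℂ) :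
    (glEmb ℓ B)ᵀ * Wm ℓ + Wm ℓ * glEmb ℓ B = 0 := by
  simp [glEmb, Wm, fromBlocks_transpose, fromBlocks_multiply, fromBlocks_add,
    ← fromBlocks_zero]

lemma glinv_pair (B : Matrix (Fin ℓ) (Fin ℓ) ℂ) (M : Matrix (Fin ℓ ⊕ Fin ℓ) (Fin ℓ ⊕ Fin ℓ) ℂ)
    (hM : (glEmb ℓ B)ᵀ * M + M * glEmb ℓ B = 0) (x y : Fin ℓ ⊕ Fin ℓ) :
    (∑ e, (glEmb ℓ B e x * M e y + glEmb ℓ B e y * M x e)) = 0 := by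
  have h1 : ∑ e, glEmb ℓ B e x * M e y = ((glEmb ℓ B)ᵀ * M) x y := by
    rw [Matrix.mul_apply]
    exact Finset.sum_congr rfl fun e _ => by rw [Matrix.transpose_apply]
  have h2 : ∑ e, glEmb ℓ B e y * M x e = (M * glEmb ℓ B) x y := by
    rw [Matrix.mul_apply]
    exact Finset.sum_congr rfl fun e _ => by rw [mul_comm]
  rw [Finset.sum_add_distrib, h1, h2, ← Matrix.add_apply, hM, Matrix.zero_apply]

lemma phi0_inv (B : Matrix (Fin ℓ) (Fin ℓ) ℂ) (a b c d : Fin ℓ ⊕ Fin ℓ) :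
    ∑ e, (glEmb ℓ B e a * phi0 ℓ e b c d + glEmb ℓ B e b * phi0 ℓ a e c d +
          glEmb ℓ B e c * phi0 ℓ a b e d + glEmb ℓ B e d * phi0 ℓ a b c e) = 0 := by
  have hG := glinv_pair ℓ B (splitForm ℓ) (glinvG ℓ B)
  have hW := glinv_pair ℓ B (Wm ℓ) (glinvW ℓ B)
  have expand : (∑ e, (glEmb ℓ B e a * phi0 ℓ e b c d + glEmb ℓ B e b * phi0 ℓ a e c d +
          glEmb ℓ B e c * phi0 ℓ a b e d + glEmb ℓ B e d * phi0 ℓ a b c e))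
      = 3 * ((∑ e, (glEmb ℓ B e a * splitForm ℓ e c + glEmb ℓ B e c * splitForm ℓ a e)) * splitForm ℓ b d
         + splitForm ℓ a c * (∑ e, (glEmb ℓ B e b * splitForm ℓ e d + glEmb ℓ B e d * splitForm ℓ b e))
         - (∑ e, (glEmb ℓ B e a * splitForm ℓ e d + glEmb ℓ B e d * splitForm ℓ a e)) * splitForm ℓ b c
         - splitForm ℓ a d * (∑ e, (glEmb ℓ B e b * splitForm ℓ e c + glEmb ℓ B e c * splitForm ℓ b e)))
      + (2 * (ℓ : ℂ) - 1) * (2 * ((∑ e, (glEmb ℓ B e a * Wm ℓ e b + glEmb ℓ B e b * Wm ℓ a e)) * Wm ℓ c d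
         + Wm ℓ a b * (∑ e, (glEmb ℓ B e c * Wm ℓ e d + glEmb ℓ B e d * Wm ℓ c e)))
         + (∑ e, (glEmb ℓ B e a * Wm ℓ e c + glEmb ℓ B e c * Wm ℓ a e)) * Wm ℓ b d
         + Wm ℓ a c * (∑ e, (glEmb ℓ B e b * Wm ℓ e d + glEmb ℓ B e d * Wm ℓ b e))
         - (∑ e, (glEmb ℓ B e a * Wm ℓ e d + glEmb ℓ B e d * Wm ℓ a e)) * Wm ℓ b c
         - Wm ℓ a d * (∑ e, (glEmb ℓ B e b * Wm ℓ e c + glEmb ℓ B e c * Wm ℓ b e))) := by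
    simp only [Finset.sum_mul, Finset.mul_sum, ← Finset.sum_add_distrib, ← Finset.sum_sub_distrib]
    refine Finset.sum_congr rfl fun e _ => ?_
    simp only [phi0]; ring
  rw [expand, hG a c, hG b d, hG a d, hG b c, hW a b, hW c d, hW a c, hW b d, hW a d, hW b c]
  ring

lemma sum_std (p q : Fin ℓ) (f : Fin ℓ ⊕ Fin ℓ → ℂ) (a : Fin ℓ ⊕ Fin ℓ) :
    ∑ e, glEmb ℓ (Matrix.single p q 1) e a * f e =
      (if a = Sum.inl q then f (Sum.inl p) else 0) -
      (if a = Sum.inr p then f (Sum.inr q) else 0) := by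
  rcases a with m | m
  · by_cases hqm : q = m
    · subst hqm
      simp [Fintype.sum_sum_type, glEmb, fromBlocks, Matrix.single,
        ite_and, Finset.sum_ite_eq, Matrix.of_apply]
    · simp [Fintype.sum_sum_type, glEmb, fromBlocks, Matrix.single,
        ite_and, hqm, Ne.symm hqm, Sum.inl.injEq, Matrix.of_apply]
  · by_cases hpm : p = m
    · subst hpm
      simp [Fintype.sum_sum_type, glEmb, fromBlocks, Matrix.single,
        ite_and, Finset.sum_ite_eq, Matrix.of_apply]
    · simp [Fintype.sum_sum_type, glEmb, fromBlocks, Matrix.single,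
        ite_and, hpm, Ne.symm hpm, Sum.inr.injEq, Matrix.of_apply]

lemma sum_one (f : Fin ℓ ⊕ Fin ℓ → ℂ) (a : Fin ℓ ⊕ Fin ℓ) :
    ∑ e, glEmb ℓ 1 e a * f e = Sum.elim (fun _ => (1:ℂ)) (fun _ => (-1:ℂ)) a * f a := by
  rcases a with m | m <;>
    simp [Fintype.sum_sum_type, glEmb, fromBlocks, one_apply, Finset.sum_ite_eq]

lemma trace_split (ψ : Fin ℓ ⊕ Fin ℓ → Fin ℓ ⊕ Fin ℓ → ℂ) :
    ∑ x, ∑ y, splitForm ℓ x y * ψ x y =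
      (∑ k, ψ (Sum.inl k) (Sum.inr k)) + ∑ k, ψ (Sum.inr k) (Sum.inl k) := by
  simp only [Fintype.sum_sum_type, G_ll, G_rr, G_lr, G_rl, ite_mul, one_mul, zero_mul,
    Finset.sum_ite_eq, Finset.mem_univ, if_true, Finset.sum_add_distrib, Finset.sum_const_zero,
    zero_add, add_zero]
  ring

end WeylAux

open WeylAux in
/-- For `ℓ ≥ 3`, as a representation of `gl(V)` with `V = ℂ^ℓ`, the space of algebraic Weyl
tensors on `ℂ^{2ℓ} = V ⊕ V*` contains exactly one trivial one-dimensional summand: the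
subspace of `gl(ℓ,ℂ)`-invariant Weyl tensors is one-dimensional. -/
theorem gl_invariant_weyl_one_dimensional (ℓ : ℕ) (hℓ : 3 ≤ ℓ) :
    ∃ φ₀ : (Fin ℓ ⊕ Fin ℓ) → (Fin ℓ ⊕ Fin ℓ) → (Fin ℓ ⊕ Fin ℓ) → (Fin ℓ ⊕ Fin ℓ) → ℂ,
      IsWeylTensor ℓ φ₀ ∧ IsGlInvariant ℓ φ₀ ∧ φ₀ ≠ 0 ∧
      ∀ φ, IsWeylTensor ℓ φ → IsGlInvariant ℓ φ → ∃ c : ℂ, φ = c • φ₀ := by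
  have hn2 : (2 * (ℓ : ℂ) + 2) ≠ 0 := by
    intro h
    have h2 : ((2 * ℓ + 2 : ℕ) : ℂ) = 0 := by push_cast; linear_combination h
    rw [Nat.cast_eq_zero] at h2; omega
  refine ⟨phi0 ℓ, ⟨phi0_skew1 ℓ, phi0_skew2 ℓ, phi0_pair ℓ, phi0_bianchi ℓ, phi0_trace ℓ⟩,
    phi0_inv ℓ, ?_, ?_⟩
  · intro h
    have h0 := congrFun (congrFun (congrFun (congrFun h
      (Sum.inl ⟨0, by omega⟩)) (Sum.inl ⟨1, by omega⟩)) (Sum.inr ⟨0, by omega⟩))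
      (Sum.inr ⟨1, by omega⟩)
    simp [phi0, Fin.mk.injEq] at h0
    exact hn2 (by linear_combination h0)
  · intro φ hWT hInv
    obtain ⟨hs1, hs2, hs3, hs4, htr⟩ := hWT
    obtain ⟨n0, n1, hn01⟩ : ∃ a b : Fin ℓ, a ≠ b :=
      ⟨⟨0, by omega⟩, ⟨1, by omega⟩, by simp⟩
    -- infinitesimal invariance under the elementary matrices E_{pq}
    have hmov : ∀ p q : Fin ℓ, ∀ a b c d : Fin ℓ ⊕ Fin ℓ,
        ((if a = Sum.inl q then φ (Sum.inl p) b c d else 0) -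
         (if a = Sum.inr p then φ (Sum.inr q) b c d else 0)) +
        ((if b = Sum.inl q then φ a (Sum.inl p) c d else 0) -
         (if b = Sum.inr p then φ a (Sum.inr q) c d else 0)) +
        ((if c = Sum.inl q then φ a b (Sum.inl p) d else 0) -
         (if c = Sum.inr p then φ a b (Sum.inr q) d else 0)) +
        ((if d = Sum.inl q then φ a b c (Sum.inl p) else 0) -
         (if d = Sum.inr p then φ a b c (Sum.inr q) else 0)) = 0 := by
      intro p q a b c d
      have h := hInv (Matrix.single p q 1) a b c d
      have e1 : ∑ e, glEmb ℓ (Matrix.single p q 1) e a * φ e b c d =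
          (if a = Sum.inl q then φ (Sum.inl p) b c d else 0) -
          (if a = Sum.inr p then φ (Sum.inr q) b c d else 0) :=
        sum_std ℓ p q (fun e => φ e b c d) a
      have e2 : ∑ e, glEmb ℓ (Matrix.single p q 1) e b * φ a e c d =
          (if b = Sum.inl q then φ a (Sum.inl p) c d else 0) -
          (if b = Sum.inr p then φ a (Sum.inr q) c d else 0) :=
        sum_std ℓ p q (fun e => φ a e c d) b
      have e3 : ∑ e, glEmb ℓ (Matrix.single p q 1) e c * φ a b e d =
          (if c = Sum.inl q then φ a b (Sum.inl p) d else 0) -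
          (if c = Sum.inr p then φ a b (Sum.inr q) d else 0) :=
        sum_std ℓ p q (fun e => φ a b e d) c
      have e4 : ∑ e, glEmb ℓ (Matrix.single p q 1) e d * φ a b c e =
          (if d = Sum.inl q then φ a b c (Sum.inl p) else 0) -
          (if d = Sum.inr p then φ a b c (Sum.inr q) else 0) :=
        sum_std ℓ p q (fun e => φ a b c e) d
      rw [Finset.sum_add_distrib, Finset.sum_add_distrib, Finset.sum_add_distrib,
        e1, e2, e3, e4] at h
      linear_combination h
    -- infinitesimal invariance under the identity (grading operator)
    have hone : ∀ a b c d : Fin ℓ ⊕ Fin ℓ,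
        (Sum.elim (fun _ => (1:ℂ)) (fun _ => (-1:ℂ)) a +
         Sum.elim (fun _ => (1:ℂ)) (fun _ => (-1:ℂ)) b +
         Sum.elim (fun _ => (1:ℂ)) (fun _ => (-1:ℂ)) c +
         Sum.elim (fun _ => (1:ℂ)) (fun _ => (-1:ℂ)) d) * φ a b c d = 0 := by
      intro a b c d
      have h := hInv 1 a b c d
      have e1 : ∑ e, glEmb ℓ 1 e a * φ e b c d =
          Sum.elim (fun _ => (1:ℂ)) (fun _ => (-1:ℂ)) a * φ a b c d :=
        sum_one ℓ (fun e => φ e b c d) a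
      have e2 : ∑ e, glEmb ℓ 1 e b * φ a e c d =
          Sum.elim (fun _ => (1:ℂ)) (fun _ => (-1:ℂ)) b * φ a b c d :=
        sum_one ℓ (fun e => φ a e c d) b
      have e3 : ∑ e, glEmb ℓ 1 e c * φ a b e d =
          Sum.elim (fun _ => (1:ℂ)) (fun _ => (-1:ℂ)) c * φ a b c d :=
        sum_one ℓ (fun e => φ a b e d) c
      have e4 : ∑ e, glEmb ℓ 1 e d * φ a b c e =
          Sum.elim (fun _ => (1:ℂ)) (fun _ => (-1:ℂ)) d * φ a b c d :=
        sum_one ℓ (fun e => φ a b c e) d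
      rw [Finset.sum_add_distrib, Finset.sum_add_distrib, Finset.sum_add_distrib,
        e1, e2, e3, e4] at h
      linear_combination h
    -- symmetry of the Q-component
    have hQsym : ∀ i j : Fin ℓ, φ (Sum.inl i) (Sum.inl j) (Sum.inr i) (Sum.inr j) =
        φ (Sum.inl j) (Sum.inl i) (Sum.inr j) (Sum.inr i) := by
      intro i j
      rw [hs1 (Sum.inl i) (Sum.inl j) (Sum.inr i) (Sum.inr j),
        hs2 (Sum.inl j) (Sum.inl i) (Sum.inr i) (Sum.inr j)]
      ring
    -- moves for the Q-component
    have hQ2 : ∀ p r j : Fin ℓ, p ≠ r → p ≠ j → r ≠ j →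
        φ (Sum.inl p) (Sum.inl j) (Sum.inr p) (Sum.inr j) =
        φ (Sum.inl r) (Sum.inl j) (Sum.inr r) (Sum.inr j) := by
      intro p r j hpr hpj hrj
      have h := hmov p r (Sum.inl r) (Sum.inl j) (Sum.inr p) (Sum.inr j)
      simp [Ne.symm hrj, Ne.symm hpj] at h
      linear_combination h
    have hQ3 : ∀ j p r : Fin ℓ, j ≠ p → j ≠ r → p ≠ r →
        φ (Sum.inl j) (Sum.inl p) (Sum.inr j) (Sum.inr p) =
        φ (Sum.inl j) (Sum.inl r) (Sum.inr j) (Sum.inr r) := by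
      intro j p r hjp hjr hpr
      have h := hmov p r (Sum.inl j) (Sum.inl r) (Sum.inr j) (Sum.inr p)
      simp [hjr, hjp] at h
      linear_combination h
    have hQconst : ∀ i j : Fin ℓ, i ≠ j →
        φ (Sum.inl i) (Sum.inl j) (Sum.inr i) (Sum.inr j) =
        φ (Sum.inl n0) (Sum.inl n1) (Sum.inr n0) (Sum.inr n1) := by
      intro i j hij
      by_cases hj1 : j = n1
      · rw [hj1]; rw [hj1] at hij
        by_cases hi0 : i = n0
        · rw [hi0]
        · exact hQ2 i n0 n1 hi0 hij hn01
      · by_cases hi1 : i = n1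
        · rw [hi1]; rw [hi1] at hij
          by_cases hj0 : j = n0
          · rw [hj0]; exact hQsym n1 n0
          · have h1 := hQ3 n1 j n0 hij (Ne.symm hn01) hj0
            rw [h1]; exact hQsym n1 n0
        · have h1 := hQ3 i j n1 hij hi1 hj1
          rw [h1]
          by_cases hi0 : i = n0
          · rw [hi0]
          · exact hQ2 i n0 n1 hi0 hi1 hn01
    -- symmetry and moves for the S-component
    have hSsym : ∀ i j : Fin ℓ, φ (Sum.inl i) (Sum.inr j) (Sum.inl j) (Sum.inr i) =
        φ (Sum.inl j) (Sum.inr i) (Sum.inl i) (Sum.inr j) := by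
      intro i j; exact hs3 _ _ _ _
    have hS2 : ∀ p r j : Fin ℓ, p ≠ r → p ≠ j → r ≠ j →
        φ (Sum.inl p) (Sum.inr j) (Sum.inl j) (Sum.inr p) =
        φ (Sum.inl r) (Sum.inr j) (Sum.inl j) (Sum.inr r) := by
      intro p r j hpr hpj hrj
      have h := hmov p r (Sum.inl r) (Sum.inr j) (Sum.inl j) (Sum.inr p)
      simp [Ne.symm hrj, Ne.symm hpj] at h
      linear_combination h
    have hS3 : ∀ j p r : Fin ℓ, j ≠ p → j ≠ r → p ≠ r →
        φ (Sum.inl j) (Sum.inr p) (Sum.inl p) (Sum.inr j) =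
        φ (Sum.inl j) (Sum.inr r) (Sum.inl r) (Sum.inr j) := by
      intro j p r hjp hjr hpr
      have h := hmov p r (Sum.inl j) (Sum.inr p) (Sum.inl r) (Sum.inr j)
      simp [hjr, hjp] at h
      linear_combination h
    have hSconst : ∀ i j : Fin ℓ, i ≠ j →
        φ (Sum.inl i) (Sum.inr j) (Sum.inl j) (Sum.inr i) =
        φ (Sum.inl n0) (Sum.inr n1) (Sum.inl n1) (Sum.inr n0) := by
      intro i j hij
      by_cases hj1 : j = n1
      · rw [hj1]; rw [hj1] at hij
        by_cases hi0 : i = n0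
        · rw [hi0]
        · exact hS2 i n0 n1 hi0 hij hn01
      · by_cases hi1 : i = n1
        · rw [hi1]; rw [hi1] at hij
          by_cases hj0 : j = n0
          · rw [hj0]; exact hSsym n1 n0
          · have h1 := hS3 n1 j n0 hij (Ne.symm hn01) hj0
            rw [h1]; exact hSsym n1 n0
        · have h1 := hS3 i j n1 hij hi1 hj1
          rw [h1]
          by_cases hi0 : i = n0
          · rw [hi0]
          · exact hS2 i n0 n1 hi0 hi1 hn01
    -- the P-component via the Bianchi identity
    have hP : ∀ i k : Fin ℓ, i ≠ k →
        φ (Sum.inl i) (Sum.inr i) (Sum.inl k) (Sum.inr k) = φ (Sum.inl n0) (Sum.inl n1) (Sum.inr n0) (Sum.inr n1) + φ (Sum.inl n0) (Sum.inr n1) (Sum.inl n1) (Sum.inr n0) := by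
      intro i k hik
      have h4 := hs4 (Sum.inl i) (Sum.inr i) (Sum.inl k) (Sum.inr k)
      have e2 : φ (Sum.inl i) (Sum.inl k) (Sum.inr k) (Sum.inr i) = -(φ (Sum.inl n0) (Sum.inl n1) (Sum.inr n0) (Sum.inr n1)) := by
        rw [hs2 (Sum.inl i) (Sum.inl k) (Sum.inr k) (Sum.inr i), hQconst i k hik]
      have e3 : φ (Sum.inl i) (Sum.inr k) (Sum.inr i) (Sum.inl k) = -(φ (Sum.inl n0) (Sum.inr n1) (Sum.inl n1) (Sum.inr n0)) := by
        rw [hs2 (Sum.inl i) (Sum.inr k) (Sum.inr i) (Sum.inl k), hSconst i k hik]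
      linear_combination h4 - e2 - e3
    -- the diagonal T-component
    have hT : ∀ p : Fin ℓ,
        φ (Sum.inl p) (Sum.inr p) (Sum.inl p) (Sum.inr p) = φ (Sum.inl n0) (Sum.inl n1) (Sum.inr n0) (Sum.inr n1) + 2 * (φ (Sum.inl n0) (Sum.inr n1) (Sum.inl n1) (Sum.inr n0)) := by
      intro p
      obtain ⟨r, hrp⟩ : ∃ r : Fin ℓ, r ≠ p := by
        by_cases h : p = n0
        · exact ⟨n1, by rw [h]; exact Ne.symm hn01⟩
        · exact ⟨n0, Ne.symm h⟩
      have h := hmov p r (Sum.inl r) (Sum.inr p) (Sum.inl p) (Sum.inr p)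
      simp [Ne.symm hrp] at h
      have eP := hP r p hrp
      have eS := hSconst r p hrp
      linear_combination h + eP + eS
    -- the trace relation
    have sumif : ∀ w z : ℂ, ∑ k : Fin ℓ, (if k = n0 then w else z) = ((ℓ:ℂ) - 1) * z + w := by
      intro w z
      have hpt : ∀ k : Fin ℓ, (if k = n0 then w else z) = z + (if k = n0 then w - z else 0) := by
        intro k; split_ifs <;> ring
      rw [Finset.sum_congr rfl fun k _ => hpt k, Finset.sum_add_distrib, Finset.sum_const,
        Finset.sum_ite_eq' Finset.univ n0 (fun _ => w - z)]
      simp [Finset.card_univ]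
      ring
    have hrel : ((ℓ:ℂ) - 2) * (φ (Sum.inl n0) (Sum.inl n1) (Sum.inr n0) (Sum.inr n1)) = ((ℓ:ℂ) + 1) * (φ (Sum.inl n0) (Sum.inr n1) (Sum.inl n1) (Sum.inr n0)) := by
      have h := htr (Sum.inl n0) (Sum.inr n0)
      have e : ∑ x, ∑ y, splitForm ℓ x y * φ x (Sum.inl n0) y (Sum.inr n0) =
          (∑ k, φ (Sum.inl k) (Sum.inl n0) (Sum.inr k) (Sum.inr n0)) +
          ∑ k, φ (Sum.inr k) (Sum.inl n0) (Sum.inl k) (Sum.inr n0) :=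
        trace_split ℓ (fun x y => φ x (Sum.inl n0) y (Sum.inr n0))
      rw [e] at h
      have t1 : ∀ k : Fin ℓ, φ (Sum.inl k) (Sum.inl n0) (Sum.inr k) (Sum.inr n0) =
          if k = n0 then 0 else φ (Sum.inl n0) (Sum.inl n1) (Sum.inr n0) (Sum.inr n1) := by
        intro k; by_cases hk : k = n0
        · rw [if_pos hk, hk]
          have h0 := hs1 (Sum.inl n0) (Sum.inl n0) (Sum.inr n0) (Sum.inr n0)
          linear_combination h0 / 2
        · rw [if_neg hk, hs1 (Sum.inl k) (Sum.inl n0) (Sum.inr k) (Sum.inr n0),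
            hs2 (Sum.inl n0) (Sum.inl k) (Sum.inr k) (Sum.inr n0),
            hQconst n0 k (Ne.symm hk)]
          ring
      have t2 : ∀ k : Fin ℓ, φ (Sum.inr k) (Sum.inl n0) (Sum.inl k) (Sum.inr n0) =
          if k = n0 then -(φ (Sum.inl n0) (Sum.inl n1) (Sum.inr n0) (Sum.inr n1) + 2 * (φ (Sum.inl n0) (Sum.inr n1) (Sum.inl n1) (Sum.inr n0))) else -(φ (Sum.inl n0) (Sum.inr n1) (Sum.inl n1) (Sum.inr n0)) := by
        intro k; by_cases hk : k = n0
        · rw [if_pos hk, hk, hs1 (Sum.inr n0) (Sum.inl n0) (Sum.inl n0) (Sum.inr n0), hT n0]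
        · rw [if_neg hk, hs1 (Sum.inr k) (Sum.inl n0) (Sum.inl k) (Sum.inr n0),
            hSconst n0 k (Ne.symm hk)]
      rw [Finset.sum_congr rfl fun k _ => t1 k, Finset.sum_congr rfl fun k _ => t2 k,
        sumif, sumif] at h
      linear_combination h
    -- the invariant scalar
    refine ⟨(φ (Sum.inl n0) (Sum.inl n1) (Sum.inr n0) (Sum.inr n1)) / (2 * (ℓ:ℂ) + 2), ?_⟩
    set K : ℂ := (φ (Sum.inl n0) (Sum.inl n1) (Sum.inr n0) (Sum.inr n1)) / (2 * (ℓ:ℂ) + 2) with hK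
    have hKa : K * (2 * (ℓ:ℂ) + 2) = φ (Sum.inl n0) (Sum.inl n1) (Sum.inr n0) (Sum.inr n1) := by
      rw [hK]; exact div_mul_cancel₀ _ hn2
    have hKb : K * (2 * (ℓ:ℂ) - 4) = φ (Sum.inl n0) (Sum.inr n1) (Sum.inl n1) (Sum.inr n0) := by
      rw [hK, div_mul_eq_mul_div, div_eq_iff hn2]
      linear_combination 2 * hrel
    have hKc : K * (4 * (ℓ:ℂ) - 2) = φ (Sum.inl n0) (Sum.inl n1) (Sum.inr n0) (Sum.inr n1) + φ (Sum.inl n0) (Sum.inr n1) (Sum.inl n1) (Sum.inr n0) := by linear_combination hKa + hKb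
    have hKd : K * (6 * (ℓ:ℂ) - 6) = φ (Sum.inl n0) (Sum.inl n1) (Sum.inr n0) (Sum.inr n1) + 2 * (φ (Sum.inl n0) (Sum.inr n1) (Sum.inl n1) (Sum.inr n0)) := by
      linear_combination hKa + 2 * hKb
    -- all components of type (V,V,V*,V*)
    have HA : ∀ i j k l : Fin ℓ, φ (Sum.inl i) (Sum.inl j) (Sum.inr k) (Sum.inr l) =
        K * phi0 ℓ (Sum.inl i) (Sum.inl j) (Sum.inr k) (Sum.inr l) := by
      intro i j k l
      by_cases hij : i = j
      · rw [← hij]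
        have h0 : φ (Sum.inl i) (Sum.inl i) (Sum.inr k) (Sum.inr l) = 0 := by
          have h1 := hs1 (Sum.inl i) (Sum.inl i) (Sum.inr k) (Sum.inr l)
          linear_combination h1 / 2
        rw [h0]; simp only [phi0, G_ll, G_lr, G_rl, G_rr, W_ll, W_lr, W_rl, W_rr]; ring
      · by_cases hik : i = k
        · by_cases hjl : j = l
          · rw [← hik, ← hjl, hQconst i j hij]
            simp [phi0, hij, Ne.symm hij]
            linear_combination -hKa
          · rw [← hik]
            have h0 : φ (Sum.inl i) (Sum.inl j) (Sum.inr i) (Sum.inr l) = 0 := by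
              have h := hmov j j (Sum.inl i) (Sum.inl j) (Sum.inr i) (Sum.inr l)
              have hij' : ¬ (i = j) := hij
              have hlj : ¬ (l = j) := fun h' => hjl h'.symm
              simp [hij', hlj] at h
              linear_combination h
            rw [h0]; simp [phi0, hjl, Ne.symm hij]
        · by_cases hil : i = l
          · by_cases hjk : j = k
            · rw [← hil, ← hjk, hs2 (Sum.inl i) (Sum.inl j) (Sum.inr j) (Sum.inr i),
                hQconst i j hij]
              simp [phi0, hij, Ne.symm hij]
              linear_combination hKa
            · rw [← hil]
              have h0 : φ (Sum.inl i) (Sum.inl j) (Sum.inr k) (Sum.inr i) = 0 := by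
                have h := hmov j j (Sum.inl i) (Sum.inl j) (Sum.inr k) (Sum.inr i)
                have hkj : ¬ (k = j) := fun h' => hjk h'.symm
                have hij' : ¬ (i = j) := hij
                simp [hij', hkj] at h
                linear_combination h
              rw [h0]; simp [phi0, hjk, Ne.symm hij]
          · have h0 : φ (Sum.inl i) (Sum.inl j) (Sum.inr k) (Sum.inr l) = 0 := by
              have h := hmov i i (Sum.inl i) (Sum.inl j) (Sum.inr k) (Sum.inr l)
              have hji : ¬ (j = i) := fun h' => hij h'.symm
              have hki : ¬ (k = i) := fun h' => hik h'.symm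
              have hli : ¬ (l = i) := fun h' => hil h'.symm
              simp [hji, hki, hli] at h
              linear_combination h
            rw [h0]; simp [phi0, hik, hil]
    -- all components of type (V,V*,V,V*)
    have HB : ∀ i j k l : Fin ℓ, φ (Sum.inl i) (Sum.inr j) (Sum.inl k) (Sum.inr l) =
        K * phi0 ℓ (Sum.inl i) (Sum.inr j) (Sum.inl k) (Sum.inr l) := by
      intro i j k l
      by_cases hij : i = j
      · rw [← hij]
        by_cases hkl : k = l
        · rw [← hkl]
          by_cases hik : i = k
          · rw [← hik, hT i]
            simp [phi0]
            linear_combination -hKd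
          · rw [hP i k hik]
            simp [phi0, hik, Ne.symm hik]
            linear_combination -hKc
        · by_cases hik : i = k
          · rw [← hik]
            have h0 : φ (Sum.inl i) (Sum.inr i) (Sum.inl i) (Sum.inr l) = 0 := by
              have h := hmov i i (Sum.inl i) (Sum.inr i) (Sum.inl i) (Sum.inr l)
              have hli : ¬ (l = i) := fun h' => hkl (hik.symm.trans h'.symm)
              simp [hli] at h
              linear_combination h
            rw [h0]
            have hil : ¬ (i = l) := fun h' => hkl (hik.symm.trans h')
            simp [phi0, hil]
          · have h0 : φ (Sum.inl i) (Sum.inr i) (Sum.inl k) (Sum.inr l) = 0 := by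
              have h := hmov k k (Sum.inl i) (Sum.inr i) (Sum.inl k) (Sum.inr l)
              have hik' : ¬ (i = k) := hik
              have hlk : ¬ (l = k) := fun h' => hkl h'.symm
              simp [hik', hlk] at h
              linear_combination h
            rw [h0]; simp [phi0, hkl, hik]
      · by_cases hil : i = l
        · by_cases hjk : j = k
          · rw [← hil, ← hjk, hSconst i j hij]
            simp [phi0, hij, Ne.symm hij]
            linear_combination -hKb
          · rw [← hil]
            have h0 : φ (Sum.inl i) (Sum.inr j) (Sum.inl k) (Sum.inr i) = 0 := by
              have h := hmov j j (Sum.inl i) (Sum.inr j) (Sum.inl k) (Sum.inr i)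
              have hkj : ¬ (k = j) := fun h' => hjk h'.symm
              have hij' : ¬ (i = j) := hij
              simp [hij', hkj] at h
              linear_combination h
            rw [h0]; simp [phi0, hjk, hij]
        · by_cases hki : k = i
          · rw [hki]
            have h0 : φ (Sum.inl i) (Sum.inr j) (Sum.inl i) (Sum.inr l) = 0 := by
              have h := hmov i i (Sum.inl i) (Sum.inr j) (Sum.inl i) (Sum.inr l)
              have hji : ¬ (j = i) := fun h' => hij h'.symm
              have hli : ¬ (l = i) := fun h' => hil h'.symm
              simp [hji, hli] at h
              linear_combination h
            rw [h0]; simp [phi0, hij, hil]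
          · have h0 : φ (Sum.inl i) (Sum.inr j) (Sum.inl k) (Sum.inr l) = 0 := by
              have h := hmov i i (Sum.inl i) (Sum.inr j) (Sum.inl k) (Sum.inr l)
              have hji : ¬ (j = i) := fun h' => hij h'.symm
              have hli : ¬ (l = i) := fun h' => hil h'.symm
              simp [hji, hki, hli] at h
              linear_combination h
            rw [h0]; simp [phi0, hij, hil]
    -- final dispatch over the sixteen index patterns
    funext a b c d
    simp only [Pi.smul_apply, smul_eq_mul]
    rcases a with i | i <;> rcases b with j | j <;> rcases c with k | k <;> rcases d with l | l
    · have h := hone (Sum.inl i) (Sum.inl j) (Sum.inl k) (Sum.inl l)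
      simp only [Sum.elim_inl, Sum.elim_inr] at h
      have h0 : φ (Sum.inl i) (Sum.inl j) (Sum.inl k) (Sum.inl l) = 0 := by
        linear_combination h / 4
      rw [h0]; simp [phi0]
    · have h := hone (Sum.inl i) (Sum.inl j) (Sum.inl k) (Sum.inr l)
      simp only [Sum.elim_inl, Sum.elim_inr] at h
      have h0 : φ (Sum.inl i) (Sum.inl j) (Sum.inl k) (Sum.inr l) = 0 := by
        linear_combination h / 2
      rw [h0]; simp [phi0]
    · have h := hone (Sum.inl i) (Sum.inl j) (Sum.inr k) (Sum.inl l)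
      simp only [Sum.elim_inl, Sum.elim_inr] at h
      have h0 : φ (Sum.inl i) (Sum.inl j) (Sum.inr k) (Sum.inl l) = 0 := by
        linear_combination h / 2
      rw [h0]; simp [phi0]
    · exact HA i j k l
    · have h := hone (Sum.inl i) (Sum.inr j) (Sum.inl k) (Sum.inl l)
      simp only [Sum.elim_inl, Sum.elim_inr] at h
      have h0 : φ (Sum.inl i) (Sum.inr j) (Sum.inl k) (Sum.inl l) = 0 := by
        linear_combination h / 2
      rw [h0]; simp [phi0]
    · exact HB i j k l
    · rw [hs2 (Sum.inl i) (Sum.inr j) (Sum.inr k) (Sum.inl l), HB i j l k,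
        phi0_skew2 ℓ (Sum.inl i) (Sum.inr j) (Sum.inl l) (Sum.inr k)]
      ring
    · have h := hone (Sum.inl i) (Sum.inr j) (Sum.inr k) (Sum.inr l)
      simp only [Sum.elim_inl, Sum.elim_inr] at h
      have h0 : φ (Sum.inl i) (Sum.inr j) (Sum.inr k) (Sum.inr l) = 0 := by
        linear_combination -h / 2
      rw [h0]; simp [phi0]
    · have h := hone (Sum.inr i) (Sum.inl j) (Sum.inl k) (Sum.inl l)
      simp only [Sum.elim_inl, Sum.elim_inr] at h
      have h0 : φ (Sum.inr i) (Sum.inl j) (Sum.inl k) (Sum.inl l) = 0 := by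
        linear_combination h / 2
      rw [h0]; simp [phi0]
    · rw [hs1 (Sum.inr i) (Sum.inl j) (Sum.inl k) (Sum.inr l), HB j i k l,
        phi0_skew1 ℓ (Sum.inl j) (Sum.inr i) (Sum.inl k) (Sum.inr l)]
      ring
    · rw [hs1 (Sum.inr i) (Sum.inl j) (Sum.inr k) (Sum.inl l),
        hs2 (Sum.inl j) (Sum.inr i) (Sum.inr k) (Sum.inl l), HB j i l k,
        phi0_skew2 ℓ (Sum.inl j) (Sum.inr i) (Sum.inl l) (Sum.inr k),
        phi0_skew1 ℓ (Sum.inl j) (Sum.inr i) (Sum.inr k) (Sum.inl l)]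
      ring
    · have h := hone (Sum.inr i) (Sum.inl j) (Sum.inr k) (Sum.inr l)
      simp only [Sum.elim_inl, Sum.elim_inr] at h
      have h0 : φ (Sum.inr i) (Sum.inl j) (Sum.inr k) (Sum.inr l) = 0 := by
        linear_combination -h / 2
      rw [h0]; simp [phi0]
    · rw [hs3 (Sum.inr i) (Sum.inr j) (Sum.inl k) (Sum.inl l), HA k l i j,
        phi0_pair ℓ (Sum.inl k) (Sum.inl l) (Sum.inr i) (Sum.inr j)]
    · have h := hone (Sum.inr i) (Sum.inr j) (Sum.inl k) (Sum.inr l)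
      simp only [Sum.elim_inl, Sum.elim_inr] at h
      have h0 : φ (Sum.inr i) (Sum.inr j) (Sum.inl k) (Sum.inr l) = 0 := by
        linear_combination -h / 2
      rw [h0]; simp [phi0]
    · have h := hone (Sum.inr i) (Sum.inr j) (Sum.inr k) (Sum.inl l)
      simp only [Sum.elim_inl, Sum.elim_inr] at h
      have h0 : φ (Sum.inr i) (Sum.inr j) (Sum.inr k) (Sum.inl l) = 0 := by
        linear_combination -h / 2
      rw [h0]; simp [phi0]
    · have h := hone (Sum.inr i) (Sum.inr j) (Sum.inr k) (Sum.inr l)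
      simp only [Sum.elim_inl, Sum.elim_inr] at h
      have h0 : φ (Sum.inr i) (Sum.inr j) (Sum.inr k) (Sum.inr l) = 0 := by
        linear_combination -h / 4
      rw [h0]; simp [phi0]
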